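/- arXiv:0909.3507 — 7 statements merged into one kernel-verified Lean document; each statement's English description precedes it below -/
import Mathlib

section
/- Let p be a prime and n, t ∈ ℕ. The determinant map det : RC_n(𝔽_{p^t}) → 𝔽_{p^t}^* is surjective. Consequently, the subgroup RC_n(𝔽_{p^t}) ∩ SL_n(𝔽_{p^t}) has index p^t − 1 in RC_n(𝔽_{p^t}), and the number of circulant (n × n)-matrices of determinant 1 over 𝔽_{p^t} equals |RC_n(𝔽_{p^t})| / (p^t − 1). -/
open Matrix

/-! Auxiliary lemmas for the circulant determinant theorem. -/

private lemma circAux_cast_mod_of_dvd {n m : ℕ} (a : ℕ) (h : m ∣ n) :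
    ((a % n : ℕ) : ZMod m) = a := by
  conv_rhs => rw [← Nat.mod_add_div a n]
  push_cast
  rw [show ((n : ZMod m)) = 0 from (ZMod.natCast_eq_zero_iff n m).mpr h]
  ring

private lemma circAux_cast_fin_sub {n d : ℕ} (hd : d ∣ n) (i j : Fin n) :
    (((i - j : Fin n) : ℕ) : ZMod d) = (i : ℕ) - (j : ℕ) := by
  rw [Fin.sub_def]
  show (((n - (j : ℕ) + (i : ℕ)) % n : ℕ) : ZMod d) = _
  rw [circAux_cast_mod_of_dvd _ hd, Nat.cast_add, Nat.cast_sub j.2.le,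
    show ((n : ZMod d)) = 0 from (ZMod.natCast_eq_zero_iff n d).mpr hd]
  ring

private lemma circAux_blockDiag {G H α : Type*} [AddGroup G] [AddGroup H]
    [DecidableEq H] [Zero α] (w : G → α) :
    Matrix.circulant (fun x : G × H => if x.2 = 0 then w x.1 else 0) =
      Matrix.blockDiagonal (fun _ : H => Matrix.circulant w) := by
  ext ⟨g, h⟩ ⟨g', h'⟩
  by_cases hh : h = h' <;>
    simp [Matrix.blockDiagonal_apply, Prod.mk_sub_mk, sub_eq_zero, hh]

/-- Lifting an `m × m` circulant determinant to an `n × n` one, `n = m * s`,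
for coprime `m`, `s`. -/
private lemma circAux_det_lift {F : Type*} [CommRing F] {m s n : ℕ} [NeZero m] [NeZero s]
    (hn : n = m * s) (hco : Nat.Coprime m s) (w : ZMod m → F) :
    ∃ v : Fin n → F, (Matrix.circulant v).det = (Matrix.circulant w).det ^ s := by
  set bigv : ZMod m × ZMod s → F := fun x => if x.2 = 0 then w x.1 else 0 with hbigv
  set f : Fin n → ZMod m × ZMod s := fun i => (((i : ℕ) : ZMod m), ((i : ℕ) : ZMod s)) with hf
  have hdm : m ∣ n := ⟨s, hn⟩
  have hds : s ∣ n := ⟨m, by rw [hn, mul_comm]⟩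
  have hsub : ∀ i j : Fin n, f (i - j) = f i - f j := by
    intro i j
    simp only [hf, Prod.mk_sub_mk, Prod.mk.injEq]
    exact ⟨circAux_cast_fin_sub hdm i j, circAux_cast_fin_sub hds i j⟩
  have hbij : Function.Bijective f := by
    rw [Fintype.bijective_iff_injective_and_card]
    constructor
    · intro i j hij
      simp only [hf, Prod.mk.injEq] at hij
      have h1 := (ZMod.natCast_eq_natCast_iff _ _ _).mp hij.1
      have h2 := (ZMod.natCast_eq_natCast_iff _ _ _).mp hij.2
      have h3 := (Nat.modEq_and_modEq_iff_modEq_mul hco).mp ⟨h1, h2⟩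
      rw [← hn] at h3
      exact Fin.ext (by rwa [Nat.ModEq, Nat.mod_eq_of_lt i.2, Nat.mod_eq_of_lt j.2] at h3)
    · simp [ZMod.card, hn]
  set e : Fin n ≃ ZMod m × ZMod s := Equiv.ofBijective f hbij with he
  refine ⟨bigv ∘ e, ?_⟩
  have hM : Matrix.circulant (bigv ∘ e) = (Matrix.circulant bigv).submatrix e e := by
    ext i j
    simp only [Matrix.circulant_apply, Matrix.submatrix_apply, Function.comp_apply]
    rw [show e (i - j) = e i - e j from hsub i j]
  rw [hM, Matrix.det_submatrix_equiv_self, circAux_blockDiag, Matrix.det_blockDiagonal,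
    Finset.prod_const, Finset.card_univ, ZMod.card]

private lemma circAux_det_w {F : Type*} [Field F] (m : ℕ) [NeZero m] (c : F) :
    (Matrix.circulant (fun a : ZMod m => c + if a = 0 then 1 else 0)).det = 1 + c * m := by
  have h1 : (Matrix.circulant (fun a : ZMod m => c + if a = 0 then 1 else 0)) =
      1 + Matrix.replicateCol Unit (fun _ : ZMod m => c) * Matrix.replicateRow Unit (fun _ : ZMod m => (1 : F)) := by
    ext i j
    by_cases h : i = j <;>
      simp [Matrix.one_apply, Matrix.mul_apply, sub_eq_zero, h, add_comm]
  rw [h1, Matrix.det_one_add_replicateCol_mul_replicateRow]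
  simp [dotProduct, Finset.sum_const, ZMod.card, mul_comm]

private lemma circAux_charp (p t : ℕ) (hp : p.Prime) (F : Type*) [Field F] [Fintype F]
    (hF : Fintype.card F = p ^ t) : CharP F p ∧ 1 ≤ t := by
  have hr : (ringChar F).Prime := CharP.char_is_prime F (ringChar F)
  obtain ⟨a, hra, hcard⟩ := FiniteField.card F (ringChar F)
  have ht : 1 ≤ t := by
    by_contra h
    have h0 : t = 0 := by omega
    rw [h0, pow_zero] at hF
    have := Fintype.one_lt_card (α := F)
    omega
  have hdvd : p ∣ ringChar F ^ (a : ℕ) := by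
    rw [← hcard, hF]
    exact dvd_pow_self p (by omega)
  have hpr : p = ringChar F :=
    (Nat.prime_dvd_prime_iff_eq hp hr).mp (hp.dvd_of_dvd_pow hdvd)
  exact ⟨hpr ▸ ringChar.charP F, ht⟩

private lemma circAux_pow_root (p t k : ℕ) (hp : p.Prime) (ht : 1 ≤ t)
    (F : Type*) [Field F] [Fintype F]
    (hF : Fintype.card F = p ^ t) (u : Fˣ) : ∃ u' : Fˣ, u' ^ (p ^ k) = u := by
  have hco : (Nat.card Fˣ).Coprime (p ^ k) := by
    have h1 : Nat.card Fˣ = p ^ t - 1 := by rw [Nat.card_units, Nat.card_eq_fintype_card, hF]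
    rw [h1]
    refine Nat.Coprime.pow_right _ ?_
    rw [Nat.coprime_comm]
    refine (hp.coprime_iff_not_dvd).mpr ?_
    intro hd
    have h2 : p ∣ p ^ t := dvd_pow_self p (by omega)
    have h4 : 1 ≤ p ^ t := Nat.one_le_pow _ _ hp.pos
    have h3 : p ^ t - (p ^ t - 1) = 1 := by omega
    have h5 := Nat.dvd_sub h2 hd
    rw [h3] at h5
    exact hp.one_lt.ne' (Nat.eq_one_of_dvd_one h5 ▸ rfl)
  obtain ⟨u', hu'⟩ := (powCoprime hco).surjective u
  exact ⟨u', hu'⟩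

/-- Surjectivity of the determinant on invertible circulant matrices. -/
private lemma circAux_exists (p t n : ℕ) (hp : p.Prime) (hn : 0 < n)
    (F : Type*) [Field F] [Fintype F] (hF : Fintype.card F = p ^ t) (u : Fˣ) :
    ∃ M : Matrix (Fin n) (Fin n) F,
      IsUnit M ∧ (∃ v, M = Matrix.circulant v) ∧ M.det = (u : F) := by
  obtain ⟨hchar, ht⟩ := circAux_charp p t hp F hF
  set k := n.factorization p with hk
  set s := p ^ k with hs
  set m := n / s with hm
  have hn' : n = m * s := by
    rw [hm, hs, hk, mul_comm]
    exact (Nat.ordProj_mul_ordCompl_eq_self n p).symm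
  have hpm : ¬ p ∣ m := Nat.not_dvd_ordCompl hp hn.ne'
  haveI : NeZero m := ⟨(Nat.ordCompl_pos p hn.ne').ne'⟩
  haveI : NeZero s := ⟨(pow_pos hp.pos k).ne'⟩
  have hco : Nat.Coprime m s :=
    Nat.Coprime.pow_right _ (Nat.coprime_comm.mp (hp.coprime_iff_not_dvd.mpr hpm))
  have hmF : (m : F) ≠ 0 := by
    rw [Ne, CharP.cast_eq_zero_iff F p m]
    exact hpm
  obtain ⟨u', hu'⟩ := circAux_pow_root p t k hp ht F hF u
  set c : F := ((u' : F) - 1) / (m : F) with hc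
  have hw : (Matrix.circulant (fun a : ZMod m => c + if a = 0 then 1 else 0)).det = (u' : F) := by
    rw [circAux_det_w, hc, div_mul_cancel₀ _ hmF]
    ring
  obtain ⟨v, hv⟩ := circAux_det_lift hn' hco (fun a : ZMod m => c + if a = 0 then 1 else 0)
  rw [hw] at hv
  have hdet : (Matrix.circulant v).det = (u : F) := by
    rw [hv, ← Units.val_pow_eq_pow_val, hu']
  exact ⟨Matrix.circulant v, (Matrix.isUnit_iff_isUnit_det _).mpr (hdet ▸ u.isUnit),
    ⟨v, rfl⟩, hdet⟩

section circclosure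
variable {n : ℕ} {α : Type*} [CommRing α]

private lemma circAux_one : ∃ v, (1 : Matrix (Fin n) (Fin n) α) = Matrix.circulant v :=
  ⟨_, (Matrix.Fin.circulant_ite α n).symm⟩

private lemma circAux_mul {M N : Matrix (Fin n) (Fin n) α} (hM : ∃ v, M = Matrix.circulant v)
    (hN : ∃ v, N = Matrix.circulant v) : ∃ v, M * N = Matrix.circulant v := by
  obtain ⟨v, rfl⟩ := hM; obtain ⟨w, rfl⟩ := hN
  exact ⟨_, Matrix.Fin.circulant_mul v w⟩

private lemma circAux_pow {M : Matrix (Fin n) (Fin n) α} (hM : ∃ v, M = Matrix.circulant v)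
    (k : ℕ) : ∃ v, M ^ k = Matrix.circulant v := by
  induction k with
  | zero => simpa using circAux_one
  | succ k ih => rw [pow_succ]; exact circAux_mul ih hM

private lemma circAux_inv {F : Type*} [Field F] [Fintype F] {M : Matrix (Fin n) (Fin n) F}
    (hM : IsUnit M) (hC : ∃ v, M = Matrix.circulant v) :
    ∃ v, (↑(hM.unit⁻¹) : Matrix (Fin n) (Fin n) F) = Matrix.circulant v := by
  set U := hM.unit with hU
  have hfin : IsOfFinOrder U := isOfFinOrder_of_finite U
  set d := orderOf U with hd
  have hdpos : 0 < d := hfin.orderOf_pos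
  have hinv : U⁻¹ = U ^ (d - 1) := by
    refine inv_eq_of_mul_eq_one_right ?_
    have h1 : U * U ^ (d - 1) = U ^ (d - 1 + 1) := (pow_succ' U (d - 1)).symm
    rw [h1, Nat.sub_add_cancel hdpos, pow_orderOf_eq_one]
  rw [hinv, Units.val_pow_eq_pow_val]
  exact circAux_pow (by rw [IsUnit.unit_spec] at *; exact hC) (d - 1)

end circclosure

/-- **Corollary**: Let `p` be a prime, `n ≥ 1`, and let `F` be the finite field with `p^t`
elements. Then the determinant map from the invertible circulant `n × n` matrices over `F`
to `Fˣ` is surjective; consequently the circulant matrices of determinant `1` form a subgroup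
of index `p^t − 1` in `RC_n(F)`, i.e. there are exactly `|RC_n(F)| / (p^t − 1)` circulant
`n × n` matrices of determinant `1` over `F`. -/
theorem circulant_det_surjective_and_index
    (p t n : ℕ) (hp : p.Prime) (hn : 0 < n)
    (F : Type*) [Field F] [Fintype F] (hF : Fintype.card F = p ^ t) :
    (∀ u : Fˣ, ∃ M : Matrix (Fin n) (Fin n) F,
        IsUnit M ∧ (∃ v, M = Matrix.circulant v) ∧ M.det = (u : F)) ∧
    Nat.card {M : Matrix (Fin n) (Fin n) F // IsUnit M ∧ ∃ v, M = Matrix.circulant v} =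
      (p ^ t - 1) *
        Nat.card {M : Matrix (Fin n) (Fin n) F // (∃ v, M = Matrix.circulant v) ∧ M.det = 1} ∧
    Nat.card {M : Matrix (Fin n) (Fin n) F // (∃ v, M = Matrix.circulant v) ∧ M.det = 1} =
      Nat.card {M : Matrix (Fin n) (Fin n) F // IsUnit M ∧ ∃ v, M = Matrix.circulant v} /
        (p ^ t - 1) := by
  classical
  have part1 := circAux_exists p t n hp hn F hF
  refine ⟨part1, ?_⟩
  choose sec hsecU hsecC hsecD using part1
  set A := {M : Matrix (Fin n) (Fin n) F // IsUnit M ∧ ∃ v, M = Matrix.circulant v} with hA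
  set B := {M : Matrix (Fin n) (Fin n) F // (∃ v, M = Matrix.circulant v) ∧ M.det = 1} with hB
  have hBunit : ∀ N : B, IsUnit N.val :=
    fun N => (Matrix.isUnit_iff_isUnit_det _).mpr (by rw [N.2.2]; exact isUnit_one)
  set g : Fˣ × B → A := fun x =>
    ⟨sec x.1 * x.2.val, (hsecU x.1).mul (hBunit x.2), circAux_mul (hsecC x.1) x.2.2.1⟩ with hg
  have hgbij : Function.Bijective g := by
    constructor
    · rintro ⟨u, N⟩ ⟨u', N'⟩ h
      have hval : sec u * N.val = sec u' * N'.val := congrArg Subtype.val h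
      have hdet : (u : F) = (u' : F) := by
        have := congrArg Matrix.det hval
        rwa [Matrix.det_mul, Matrix.det_mul, N.2.2, N'.2.2, mul_one, mul_one,
          hsecD u, hsecD u'] at this
      have huu : u = u' := Units.ext hdet
      subst huu
      have hNN : N = N' := Subtype.ext ((hsecU u).mul_left_cancel hval)
      rw [hNN]
    · rintro ⟨M, hM, hC⟩
      have hdM : IsUnit M.det := (Matrix.isUnit_iff_isUnit_det M).mp hM
      set u : Fˣ := hdM.unit with hu
      set U : (Matrix (Fin n) (Fin n) F)ˣ := (hsecU u).unit with hU
      set N : Matrix (Fin n) (Fin n) F := (↑(U⁻¹) : Matrix (Fin n) (Fin n) F) * M with hN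
      have hNC : ∃ v, N = Matrix.circulant v := circAux_mul (circAux_inv (hsecU u) (hsecC u)) hC
      have hUdet : (↑(U⁻¹) : Matrix (Fin n) (Fin n) F).det * (u : F) = 1 := by
        have h1 : (↑(U⁻¹) : Matrix (Fin n) (Fin n) F) * (↑U : Matrix (Fin n) (Fin n) F) = 1 := by
          rw [← Units.val_mul, inv_mul_cancel, Units.val_one]
        have h2 := congrArg Matrix.det h1
        rwa [Matrix.det_mul, Matrix.det_one, IsUnit.unit_spec, hsecD u] at h2
      have hNdet : N.det = 1 := by
        rw [hN, Matrix.det_mul]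
        have hMdet : M.det = (u : F) := (IsUnit.unit_spec hdM).symm
        rw [hMdet]
        exact hUdet
      refine ⟨⟨u, ⟨N, hNC, hNdet⟩⟩, ?_⟩
      apply Subtype.ext
      show sec u * N = M
      rw [hN, ← mul_assoc, show sec u = (↑U : Matrix (Fin n) (Fin n) F) from
        (IsUnit.unit_spec (hsecU u)).symm, ← Units.val_mul, mul_inv_cancel, Units.val_one, one_mul]
  have hcardAB : Nat.card A = (p ^ t - 1) * Nat.card B := by
    rw [← Nat.card_eq_of_bijective g hgbij, Nat.card_prod]
    congr 1
    rw [Nat.card_units, Nat.card_eq_fintype_card, hF]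
  refine ⟨hcardAB, ?_⟩
  have hq : 1 < p ^ t := by
    rw [← hF]; exact Fintype.one_lt_card
  rw [hcardAB, Nat.mul_div_cancel_left _ (by omega)]
end

section
/- Let p be a prime and m, t ∈ ℕ with p ∤ m, and let σ : ℤ/mℤ → ℤ/mℤ be the permutation x ↦ p^t·x. For every positive divisor d of m, the set { x ∈ ℤ/mℤ : gcd(x, m) = m/d } (that is, the set (m/d)·(ℤ/mℤ)^*) is invariant under σ and decomposes into exactly φ(d)/ord_d(p^t) orbits of σ, each of cardinality ord_d(p^t). In particular, the cycle structure of σ is ∏_{d ∣ m} (ord_d(p^t))^{φ(d)/ord_d(p^t)}. -/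
/-- **Proposition 2.1 (cycle structure of multiplication by `p^t`)**: Let `p` be a prime,
`p ∤ m`, and let `σ : ℤ/mℤ → ℤ/mℤ` be `x ↦ p^t·x`. For every positive divisor `d` of `m`,
the set `{x : gcd(x, m) = m/d}` is invariant under `σ`, every `σ`-orbit in it has cardinality
`ord_d(p^t)`, and it decomposes into exactly `φ(d)/ord_d(p^t)` orbits. -/
theorem cycle_structure_of_mul_prime_pow
    (p t m d : ℕ) (hp : p.Prime) (hm : ¬ p ∣ m) (hd : d ∣ m) :
    (∀ x : ZMod m, Nat.gcd x.val m = m / d →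
        Nat.gcd (((p : ZMod m) ^ t * x).val) m = m / d) ∧
    (∀ x : ZMod m, Nat.gcd x.val m = m / d →
        Nat.card {y : ZMod m | ∃ k : ℕ, y = ((p : ZMod m) ^ t) ^ k * x} =
          orderOf ((p : ZMod d) ^ t)) ∧
    Nat.card {O : Set (ZMod m) | ∃ x : ZMod m, Nat.gcd x.val m = m / d ∧
        O = {y : ZMod m | ∃ k : ℕ, y = ((p : ZMod m) ^ t) ^ k * x}} =
      d.totient / orderOf ((p : ZMod d) ^ t) := by
  classical
  have hm0 : m ≠ 0 := by rintro rfl; exact hm (dvd_zero p)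
  have hd0 : d ≠ 0 := by rintro rfl; exact hm0 (Nat.eq_zero_of_zero_dvd hd)
  haveI : NeZero m := ⟨hm0⟩
  haveI : NeZero d := ⟨hd0⟩
  have hmd : m / d * d = m := Nat.div_mul_cancel hd
  have hmd0 : m / d ≠ 0 := by intro h; rw [h, zero_mul] at hmd; exact hm0 hmd.symm
  have hpm : Nat.Coprime p m := (Nat.Prime.coprime_iff_not_dvd hp).2 hm
  have hpd : Nat.Coprime p d := Nat.Coprime.coprime_dvd_right hd hpm
  set c : ZMod m := (p : ZMod m) ^ t with hc
  set n : ℕ := orderOf ((p : ZMod d) ^ t) with hn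
  have hn0 : 0 < n := by
    have h1 : ((p : ZMod d)) ^ t = ((ZMod.unitOfCoprime p hpd ^ t : (ZMod d)ˣ) : ZMod d) := by
      push_cast [ZMod.coe_unitOfCoprime]
      rfl
    rw [hn, h1, orderOf_units]
    exact orderOf_pos _
  have gcd_modeq : ∀ a b : ℕ, a ≡ b [MOD m] → Nat.gcd a m = Nat.gcd b m := by
    intro a b hab
    rw [Nat.gcd_comm a m, Nat.gcd_comm b m, Nat.gcd_rec m a, Nat.gcd_rec m b, hab]
  have part1' : ∀ (k : ℕ) (x : ZMod m), Nat.gcd x.val m = m / d →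
      Nat.gcd ((c ^ k * x).val) m = m / d := by
    intro k x hx
    have h1 : (c ^ k * x).val ≡ p ^ (t * k) * x.val [MOD m] := by
      rw [← ZMod.natCast_eq_natCast_iff]
      push_cast [ZMod.natCast_zmod_val]
      rw [hc, ← pow_mul]
    rw [gcd_modeq _ _ h1, Nat.Coprime.gcd_mul_left_cancel _ (hpm.pow_left _)]
    exact hx
  have key : ∀ x : ZMod m, Nat.gcd x.val m = m / d → ∀ k : ℕ, (c ^ k * x = x ↔ n ∣ k) := by
    intro x hx k
    obtain ⟨s, hs⟩ : (m / d) ∣ x.val := hx ▸ Nat.gcd_dvd_left x.val m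
    have h1 : m / d * Nat.gcd s d = m / d := by
      rw [← Nat.gcd_mul_left, hmd, ← hs, hx]
    have hsd : Nat.Coprime s d :=
      Nat.eq_of_mul_eq_mul_left (Nat.pos_of_ne_zero hmd0) (by rw [h1, mul_one])
    have eL : ((p ^ (t * k) * x.val : ℕ) : ZMod m) = c ^ k * x := by
      push_cast [ZMod.natCast_zmod_val]
      rw [hc, ← pow_mul]
    have eR : ((x.val : ℕ) : ZMod m) = x := ZMod.natCast_zmod_val x
    have e1 : c ^ k * x = x ↔ p ^ (t * k) * x.val ≡ x.val [MOD m] := by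
      rw [← ZMod.natCast_eq_natCast_iff, eL, eR]
    have e2 : (p ^ (t * k) * x.val ≡ x.val [MOD m]) ↔
        (d : ℤ) ∣ (1 - (p : ℤ) ^ (t * k)) * s := by
      rw [Nat.modEq_iff_dvd]
      have hm' : (m : ℤ) = ((m / d : ℕ) : ℤ) * d := by exact_mod_cast hmd.symm
      have hx' : ((x.val : ℕ) : ℤ) = ((m / d : ℕ) : ℤ) * s := by exact_mod_cast hs
      push_cast
      rw [hm', hx',
        show ((m / d : ℕ) : ℤ) * s - (p : ℤ) ^ (t * k) * (((m / d : ℕ) : ℤ) * s)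
          = ((m / d : ℕ) : ℤ) * ((1 - (p : ℤ) ^ (t * k)) * s) by ring]
      exact mul_dvd_mul_iff_left (by exact_mod_cast hmd0)
    have hcop : IsCoprime (d : ℤ) (s : ℤ) := by
      rw [Int.isCoprime_iff_gcd_eq_one]
      exact_mod_cast hsd.symm
    have e3 : ((d : ℤ) ∣ (1 - (p : ℤ) ^ (t * k)) * s) ↔ (d : ℤ) ∣ (1 - (p : ℤ) ^ (t * k)) :=
      ⟨fun h => hcop.dvd_of_dvd_mul_right h, fun h => h.mul_right _⟩
    have e4 : ((p : ZMod d) ^ t) ^ k = 1 ↔ (d : ℤ) ∣ (1 - (p : ℤ) ^ (t * k)) := by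
      rw [← pow_mul, show ((p : ZMod d)) ^ (t * k) = ((p ^ (t * k) : ℕ) : ZMod d) by push_cast; rfl,
        show (1 : ZMod d) = ((1 : ℕ) : ZMod d) by rw [Nat.cast_one],
        ZMod.natCast_eq_natCast_iff, Nat.modEq_iff_dvd]
      push_cast
      rfl
    exact e1.trans (e2.trans (e3.trans (e4.symm.trans orderOf_dvd_iff_pow_eq_one.symm)))
  have hfix : ∀ x : ZMod m, Nat.gcd x.val m = m / d → ∀ q : ℕ, c ^ (n * q) * x = x := by
    intro x hx q
    induction q with
    | zero => simp
    | succ q ih =>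
      have h1 : c ^ n * x = x := (key x hx n).2 dvd_rfl
      rw [Nat.mul_succ, pow_add, mul_assoc, h1, ih]
  have part2 : ∀ x : ZMod m, Nat.gcd x.val m = m / d →
      Nat.card {y : ZMod m | ∃ k : ℕ, y = c ^ k * x} = n := by
    intro x hx
    have hU : ((ZMod.unitOfCoprime (p ^ t) (hpm.pow_left t) : (ZMod m)ˣ) : ZMod m) = c := by
      rw [ZMod.coe_unitOfCoprime, hc]; push_cast; rfl
    have hcancel : ∀ i j : ℕ, i ≤ j → c ^ i * x = c ^ j * x → n ∣ j - i := by
      intro i j hij h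
      have h2 : c ^ i * x = c ^ i * (c ^ (j - i) * x) := by
        rw [h, ← mul_assoc, ← pow_add]
        congr 2
        omega
      have hcu : IsUnit c := ⟨_, hU⟩
      have h3 : x = c ^ (j - i) * x := (hcu.pow i).mul_left_cancel h2
      exact (key x hx _).1 h3.symm
    have hf : Function.Bijective
        (fun j : Fin n => (⟨c ^ (j : ℕ) * x, ⟨j, rfl⟩⟩ :
          {y : ZMod m | ∃ k : ℕ, y = c ^ k * x})) := by
      constructor
      · intro i j hij
        have h := Subtype.ext_iff.1 hij
        simp only at h
        rcases le_total (i : ℕ) (j : ℕ) with hle | hle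
        · have := Nat.eq_zero_of_dvd_of_lt (hcancel i j hle h) ?_ 
          · exact Fin.ext (by omega)
          · omega
        · have := Nat.eq_zero_of_dvd_of_lt (hcancel j i hle h.symm) ?_
          · exact Fin.ext (by omega)
          · omega
      · rintro ⟨y, k, rfl⟩
        refine ⟨⟨k % n, Nat.mod_lt _ hn0⟩, Subtype.ext ?_⟩
        simp only
        calc c ^ (k % n) * x = c ^ (k % n) * (c ^ (n * (k / n)) * x) := by rw [hfix x hx]
          _ = c ^ (n * (k / n) + k % n) * x := by rw [pow_add, ← mul_assoc, mul_comm (c ^ (k % n))]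
          _ = c ^ k * x := by rw [Nat.div_add_mod]
    rw [← Nat.card_eq_of_bijective _ hf, Nat.card_eq_fintype_card, Fintype.card_fin]
  -- orbits are contained in S and orbit relation is symmetric
  have hsub : ∀ x : ZMod m, Nat.gcd x.val m = m / d →
      ∀ y ∈ {y : ZMod m | ∃ k : ℕ, y = c ^ k * x}, Nat.gcd y.val m = m / d := by
    rintro x hx y ⟨k, rfl⟩
    exact part1' k x hx
  have horb_eq : ∀ x : ZMod m, Nat.gcd x.val m = m / d →
      ∀ y ∈ {y : ZMod m | ∃ k : ℕ, y = c ^ k * x},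
      {z : ZMod m | ∃ k : ℕ, z = c ^ k * y} = {z : ZMod m | ∃ k : ℕ, z = c ^ k * x} := by
    rintro x hx y ⟨k, rfl⟩
    ext z
    constructor
    · rintro ⟨j, rfl⟩
      exact ⟨j + k, by rw [pow_add, mul_assoc]⟩
    · rintro ⟨j, rfl⟩
      refine ⟨j + (n - k % n), ?_⟩
      have h2 : c ^ ((n - k % n) + k) * x = x := by
        have he : (n - k % n) + k = n * (k / n + 1) := by
          have h3 := Nat.div_add_mod k n
          have h4 := Nat.mod_lt k hn0
          have h5 : n * (k / n + 1) = n * (k / n) + n := by ring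
          omega
        rw [he]
        exact hfix x hx _
      symm
      calc c ^ (j + (n - k % n)) * (c ^ k * x)
          = c ^ j * (c ^ ((n - k % n) + k) * x) := by
            rw [pow_add, pow_add, mul_assoc, mul_assoc]
        _ = c ^ j * x := by rw [h2]
  -- cardinality of S
  have hScard : Nat.card {x : ZMod m | Nat.gcd x.val m = m / d} = d.totient := by
    have hb : Function.Bijective
        (fun x : {x : ZMod m | Nat.gcd x.val m = m / d} =>
          (⟨x.1.val, by
            simp only [Finset.mem_filter, Finset.mem_range]
            exact ⟨ZMod.val_lt x.1, by rw [Nat.gcd_comm]; exact x.2⟩⟩ :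
            {k : ℕ // k ∈ (Finset.range m).filter (fun k => Nat.gcd m k = m / d)})) := by
      constructor
      · intro a b hab
        exact Subtype.ext (ZMod.val_injective m (congrArg Subtype.val hab))
      · rintro ⟨k, hk⟩
        simp only [Finset.mem_filter, Finset.mem_range] at hk
        refine ⟨⟨(k : ZMod m), ?_⟩, Subtype.ext ?_⟩ <;>
          simp [ZMod.val_cast_of_lt hk.1, Nat.gcd_comm, hk.2]
    rw [Nat.card_eq_of_bijective _ hb, Nat.card_eq_finsetCard,
      ← Nat.totient_div_of_dvd (Nat.div_dvd_of_dvd hd), Nat.div_div_self hd hm0]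
  have hfib : ∀ O ∈ (Set.toFinite {O : Set (ZMod m) | ∃ x : ZMod m,
        Nat.gcd x.val m = m / d ∧ O = {y : ZMod m | ∃ k : ℕ, y = c ^ k * x}}).toFinset,
      ((Set.toFinite {x : ZMod m | Nat.gcd x.val m = m / d}).toFinset.filter
        (fun x => {y : ZMod m | ∃ k : ℕ, y = c ^ k * x} = O)).card = n := by
    intro O hO
    rw [Set.Finite.mem_toFinset] at hO
    obtain ⟨x₀, hx₀, rfl⟩ := hO
    have heq : (Set.toFinite {x : ZMod m | Nat.gcd x.val m = m / d}).toFinset.filter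
        (fun x => {y : ZMod m | ∃ k : ℕ, y = c ^ k * x} = {y : ZMod m | ∃ k : ℕ, y = c ^ k * x₀})
        = (Set.toFinite {y : ZMod m | ∃ k : ℕ, y = c ^ k * x₀}).toFinset := by
      ext y
      simp only [Finset.mem_filter, Set.Finite.mem_toFinset]
      constructor
      · rintro ⟨hyS, hEq⟩
        have hy : y ∈ {z : ZMod m | ∃ k : ℕ, z = c ^ k * y} := ⟨0, by simp⟩
        rw [hEq] at hy
        exact hy
      · intro hy
        exact ⟨hsub x₀ hx₀ y hy, horb_eq x₀ hx₀ y hy⟩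
    rw [heq, ← Nat.card_eq_card_finite_toFinset]
    exact part2 x₀ hx₀
  have hmapsto : ∀ x ∈ (Set.toFinite {x : ZMod m | Nat.gcd x.val m = m / d}).toFinset,
      {y : ZMod m | ∃ k : ℕ, y = c ^ k * x} ∈ (Set.toFinite {O : Set (ZMod m) | ∃ x : ZMod m,
        Nat.gcd x.val m = m / d ∧ O = {y : ZMod m | ∃ k : ℕ, y = c ^ k * x}}).toFinset := by
    intro x hx
    rw [Set.Finite.mem_toFinset] at hx ⊢
    exact ⟨x, hx, rfl⟩
  have hcount := Finset.card_eq_sum_card_fiberwise hmapsto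
  rw [Finset.sum_congr rfl hfib, Finset.sum_const, smul_eq_mul] at hcount
  rw [← Nat.card_eq_card_finite_toFinset, hScard] at hcount
  have hTcard : Nat.card {O : Set (ZMod m) | ∃ x : ZMod m, Nat.gcd x.val m = m / d ∧
      O = {y : ZMod m | ∃ k : ℕ, y = c ^ k * x}} = d.totient / n := by
    rw [Nat.card_eq_card_finite_toFinset (Set.toFinite _)]
    exact ((Nat.div_eq_of_eq_mul_left hn0 hcount).symm)
  refine ⟨fun x hx => by simpa [pow_one] using part1' 1 x hx, part2, hTcard⟩
end

section
/- Let p be a prime and r ∈ ℕ. Then for all integers i, j with 1 ≤ i, j ≤ p^r, the binomial coefficient congruence C(p^r − j, p^r − i) ≡ (−1)^{i+j} · C(i − 1, j − 1) (mod p) holds. -/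
open Nat

private lemma factAux (p : ℕ) [Fact p.Prime] :
    ∀ k, k < p → (((p - 1 - k)! : ℕ) : ZMod p) * ((k ! : ℕ) : ZMod p) = (-1) ^ (k + 1) := by
  intro k
  induction k with
  | zero =>
    intro _
    simp [ZMod.wilsons_lemma p]
  | succ k ih =>
    intro hk
    have hk' : k < p := Nat.lt_of_succ_lt hk
    have key := ih hk'
    have h1 : p - 1 - k = (p - 1 - (k + 1)) + 1 := by omega
    have e1 : (p - 1 - k)! = (p - 1 - k) * (p - 1 - (k + 1))! := by
      rw [h1, Nat.factorial_succ, ← h1]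
    have h2 : ((p - 1 - k : ℕ) : ZMod p) = -((k : ZMod p) + 1) := by
      have hpk : (p - 1 - k) + (k + 1) = p := by omega
      have hc := congrArg (Nat.cast : ℕ → ZMod p) hpk
      push_cast at hc
      have hz : ((p : ℕ) : ZMod p) = 0 := ZMod.natCast_self p
      linear_combination hc + hz
    rw [e1] at key
    push_cast at key
    rw [h2] at key
    rw [Nat.factorial_succ]
    push_cast
    rw [pow_succ]
    linear_combination (-1 : ZMod p) * key

private lemma digitAux (p : ℕ) [Fact p.Prime] (a b : ℕ) (ha : a < p) (hb : b < p) :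
    (((p - 1 - b).choose (p - 1 - a) : ℕ) : ZMod p) =
      (-1) ^ (a + b) * ((a.choose b : ℕ) : ZMod p) := by
  have hp : p.Prime := Fact.out
  rcases lt_or_ge a b with h | h
  · rw [Nat.choose_eq_zero_of_lt (by omega), Nat.choose_eq_zero_of_lt h]
    simp
  · have e1 : (p - 1 - b).choose (p - 1 - a) * (p - 1 - a)! * (a - b)! = (p - 1 - b)! := by
      have h0 := Nat.choose_mul_factorial_mul_factorial
        (n := p - 1 - b) (k := p - 1 - a) (by omega)
      have hs : (p - 1 - b) - (p - 1 - a) = a - b := by omega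
      rwa [hs] at h0
    have e2 : a.choose b * b ! * (a - b)! = a ! :=
      Nat.choose_mul_factorial_mul_factorial h
    have Wa := factAux p a ha
    have Wb := factAux p b hb
    have hne : ∀ k, k < p → ((k ! : ℕ) : ZMod p) ≠ 0 := by
      intro k hk
      rw [Ne, ZMod.natCast_eq_zero_iff]
      intro hdvd
      exact absurd (hp.dvd_factorial.mp hdvd) (by omega)
    have E1 := congrArg (Nat.cast : ℕ → ZMod p) e1
    have E2 := congrArg (Nat.cast : ℕ → ZMod p) e2
    push_cast at E1 E2
    set X := (((p - 1 - b).choose (p - 1 - a) : ℕ) : ZMod p) with hX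
    set Y := ((a.choose b : ℕ) : ZMod p) with hY
    set Fpa := (((p - 1 - a)! : ℕ) : ZMod p) with hFpa
    set Fpb := (((p - 1 - b)! : ℕ) : ZMod p) with hFpb
    set Fa := ((a ! : ℕ) : ZMod p) with hFa
    set Fb := ((b ! : ℕ) : ZMod p) with hFb
    set Fab := (((a - b)! : ℕ) : ZMod p) with hFab
    have key : X * (-1) ^ (a + 1) = (-1) ^ (b + 1) * Y := by
      have h0 : X * (-1) ^ (a + 1) * (Fab * Fb) = (-1) ^ (b + 1) * Y * (Fab * Fb) := by
        calc X * (-1) ^ (a + 1) * (Fab * Fb)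
            = X * (Fpa * Fa) * (Fab * Fb) := by rw [Wa]
          _ = (X * Fpa * Fab) * (Fa * Fb) := by ring
          _ = Fpb * (Fa * Fb) := by rw [E1]
          _ = (Fpb * Fb) * Fa := by ring
          _ = (-1) ^ (b + 1) * Fa := by rw [Wb]
          _ = (-1) ^ (b + 1) * (Y * Fb * Fab) := by rw [E2]
          _ = (-1) ^ (b + 1) * Y * (Fab * Fb) := by ring
      exact mul_right_cancel₀ (mul_ne_zero (hne _ (by omega)) (hne _ hb)) h0
    have hsq : ((-1 : ZMod p)) ^ (a + 1) * (-1) ^ (a + 1) = 1 := by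
      rw [← pow_add]
      exact Even.neg_one_pow ⟨a + 1, rfl⟩
    calc X = X * ((-1) ^ (a + 1) * (-1) ^ (a + 1)) := by rw [hsq, mul_one]
      _ = (X * (-1) ^ (a + 1)) * (-1) ^ (a + 1) := by ring
      _ = ((-1) ^ (b + 1) * Y) * (-1) ^ (a + 1) := by rw [key]
      _ = (-1) ^ ((b + 1) + (a + 1)) * Y := by rw [pow_add]; ring
      _ = (-1) ^ (a + b) * Y := by
          have he : (b + 1) + (a + 1) = (a + b) + 2 := by ring
          rw [he, pow_add]
          norm_num

private lemma mainAux (p : ℕ) [Fact p.Prime] :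
    ∀ r i j : ℕ, 1 ≤ i → i ≤ p ^ r → 1 ≤ j → j ≤ p ^ r →
      (((p ^ r - j).choose (p ^ r - i) : ℕ) : ZMod p) =
        (-1) ^ (i + j) * (((i - 1).choose (j - 1) : ℕ) : ZMod p) := by
  intro r
  induction r with
  | zero =>
    intro i j hi1 hip hj1 hjp
    simp only [pow_zero] at hip hjp
    have hi : i = 1 := by omega
    have hj : j = 1 := by omega
    subst hi hj
    norm_num
  | succ r ih =>
    intro i j hi1 hip hj1 hjp
    have hp : p.Prime := Fact.out
    have hp0 : 0 < p := hp.pos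
    set a := (i - 1) % p with hadef
    set b := (j - 1) % p with hbdef
    set qi := (i - 1) / p with hqidef
    set qj := (j - 1) / p with hqjdef
    have hia : i - 1 = p * qi + a := (Nat.div_add_mod (i - 1) p).symm
    have hja : j - 1 = p * qj + b := (Nat.div_add_mod (j - 1) p).symm
    have ha : a < p := Nat.mod_lt _ hp0
    have hb : b < p := Nat.mod_lt _ hp0
    have hmulX : p ^ (r + 1) = p * p ^ r := by ring
    have hqi_lt : qi < p ^ r := Nat.div_lt_of_lt_mul (by omega)
    have hqj_lt : qj < p ^ r := Nat.div_lt_of_lt_mul (by omega)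
    have hei : p * (p ^ r - (qi + 1)) + p * (qi + 1) = p * p ^ r := by
      rw [← Nat.mul_add]; congr 1; omega
    have hei2 : p * (qi + 1) = p * qi + p := by ring
    have hej : p * (p ^ r - (qj + 1)) + p * (qj + 1) = p * p ^ r := by
      rw [← Nat.mul_add]; congr 1; omega
    have hej2 : p * (qj + 1) = p * qj + p := by ring
    have hmi : p ^ (r + 1) - i = p * (p ^ r - (qi + 1)) + (p - 1 - a) := by omega
    have hmj : p ^ (r + 1) - j = p * (p ^ r - (qj + 1)) + (p - 1 - b) := by omega
    have hmodi : (p ^ (r + 1) - i) % p = p - 1 - a := by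
      rw [hmi, Nat.mul_add_mod, Nat.mod_eq_of_lt (by omega)]
    have hmodj : (p ^ (r + 1) - j) % p = p - 1 - b := by
      rw [hmj, Nat.mul_add_mod, Nat.mod_eq_of_lt (by omega)]
    have hdivi : (p ^ (r + 1) - i) / p = p ^ r - (qi + 1) := by
      rw [hmi, Nat.mul_add_div hp0, Nat.div_eq_of_lt (by omega), Nat.add_zero]
    have hdivj : (p ^ (r + 1) - j) / p = p ^ r - (qj + 1) := by
      rw [hmj, Nat.mul_add_div hp0, Nat.div_eq_of_lt (by omega), Nat.add_zero]
    have lucas1 : (((p ^ (r + 1) - j).choose (p ^ (r + 1) - i) : ℕ) : ZMod p) =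
        ((((p ^ (r + 1) - j) % p).choose ((p ^ (r + 1) - i) % p) *
          ((p ^ (r + 1) - j) / p).choose ((p ^ (r + 1) - i) / p) : ℕ) : ZMod p) :=
      (ZMod.natCast_eq_natCast_iff _ _ _).mpr
        Choose.choose_modEq_choose_mod_mul_choose_div_nat
    rw [hmodi, hmodj, hdivi, hdivj] at lucas1
    have lucas2 : (((i - 1).choose (j - 1) : ℕ) : ZMod p) =
        ((((i - 1) % p).choose ((j - 1) % p) *
          ((i - 1) / p).choose ((j - 1) / p) : ℕ) : ZMod p) :=
      (ZMod.natCast_eq_natCast_iff _ _ _).mpr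
        Choose.choose_modEq_choose_mod_mul_choose_div_nat
    rw [← hadef, ← hbdef, ← hqidef, ← hqjdef] at lucas2
    push_cast at lucas1 lucas2
    have ihr := ih (qi + 1) (qj + 1) (Nat.succ_le_succ (Nat.zero_le _)) hqi_lt (Nat.succ_le_succ (Nat.zero_le _)) hqj_lt
    simp only [Nat.add_sub_cancel] at ihr
    have hsign : ((-1 : ZMod p)) ^ ((a + b) + ((qi + 1) + (qj + 1))) = (-1) ^ (i + j) := by
      rcases hp.eq_two_or_odd with hp2 | hodd
      · subst hp2
        have hone : (-1 : ZMod 2) = 1 := rfl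
        rw [hone, one_pow, one_pow]
      · obtain ⟨t, ht⟩ : ∃ t, p = 2 * t + 1 := ⟨p / 2, by omega⟩
        have e1 : p * qi = 2 * (t * qi) + qi := by rw [ht]; ring
        have e2 : p * qj = 2 * (t * qj) + qj := by rw [ht]; ring
        have hm : ((a + b) + ((qi + 1) + (qj + 1))) % 2 = (i + j) % 2 := by omega
        rw [neg_one_pow_eq_pow_mod_two, hm, ← neg_one_pow_eq_pow_mod_two]
    calc (((p ^ (r + 1) - j).choose (p ^ (r + 1) - i) : ℕ) : ZMod p)
        = (((p - 1 - b).choose (p - 1 - a) : ℕ) : ZMod p) *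
          (((p ^ r - (qj + 1)).choose (p ^ r - (qi + 1)) : ℕ) : ZMod p) := lucas1
      _ = ((-1) ^ (a + b) * ((a.choose b : ℕ) : ZMod p)) *
          ((-1) ^ ((qi + 1) + (qj + 1)) * ((qi.choose qj : ℕ) : ZMod p)) := by
          rw [digitAux p a b ha hb, ihr]
      _ = (-1) ^ ((a + b) + ((qi + 1) + (qj + 1))) *
          (((a.choose b : ℕ) : ZMod p) * ((qi.choose qj : ℕ) : ZMod p)) := by
          rw [pow_add]; ring
      _ = (-1) ^ (i + j) * (((i - 1).choose (j - 1) : ℕ) : ZMod p) := by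
          rw [hsign, ← lucas2]

/-- **Corollary 2.4 (entry form)**: Let `p` be a prime and `r ∈ ℕ`. Then for all
`1 ≤ i, j ≤ p^r` we have `C(p^r − j, p^r − i) ≡ (−1)^{i+j} · C(i − 1, j − 1) (mod p)`. -/
theorem choose_sub_congr_prime_pow
    (p r : ℕ) (hp : p.Prime) (i j : ℕ)
    (hi1 : 1 ≤ i) (hip : i ≤ p ^ r) (hj1 : 1 ≤ j) (hjp : j ≤ p ^ r) :
    (((p ^ r - j).choose (p ^ r - i) : ZMod p)) =
      (-1) ^ (i + j) * (((i - 1).choose (j - 1) : ZMod p)) := by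
  haveI := Fact.mk hp
  exact mainAux p r i j hi1 hip hj1 hjp
end

section
/- Let p be a prime and r ∈ ℕ. Then the Pascal matrix Pasc_{p^r}(𝔽_p) of size p^r × p^r over 𝔽_p equals the r-fold Kronecker product Pasc_p(𝔽_p)^{⊗ r} of the (p × p)-Pascal matrix over 𝔽_p with itself. -/
/-- The `r`-fold Kronecker power of a `(p × p)`-matrix, with the index set `Fin (p^r)`
identified with `r`-tuples of base-`p` digits (as in Lucas' theorem). -/
def kroneckerPow {α : Type*} [CommSemiring α] {p : ℕ} (A : Matrix (Fin p) (Fin p) α) :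
    (r : ℕ) → Matrix (Fin (p ^ r)) (Fin (p ^ r)) α
  | 0 => 1
  | r + 1 =>
      Matrix.reindex
        (finProdFinEquiv.trans (finCongr (by ring : p * p ^ r = p ^ (r + 1))))
        (finProdFinEquiv.trans (finCongr (by ring : p * p ^ r = p ^ (r + 1))))
        (Matrix.kroneckerMap (· * ·) A (kroneckerPow A r))

lemma choose_split (p : ℕ) (hp : p.Prime) (r n k : ℕ) :
    ((n.choose k : ZMod p)) =
      ((n / p ^ r).choose (k / p ^ r) : ZMod p) * ((n % p ^ r).choose (k % p ^ r) : ZMod p) := by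
  haveI : Fact p.Prime := ⟨hp⟩
  induction r generalizing n k with
  | zero => simp [Nat.mod_one]
  | succ r ih =>
      have base : ∀ a b : ℕ, ((a.choose b : ZMod p)) =
          ((a % p).choose (b % p) : ZMod p) * ((a / p).choose (b / p) : ZMod p) := by
        intro a b
        have h := (Choose.choose_modEq_choose_mod_mul_choose_div_nat (n := a) (k := b) (p := p))
        have := (ZMod.natCast_eq_natCast_iff _ _ _).mpr h
        push_cast at this
        exact this
      rw [base n k, ih (n / p) (k / p), base (n % p ^ (r + 1)) (k % p ^ (r + 1))]
      have h1 : ∀ a : ℕ, a % p ^ (r + 1) % p = a % p := fun a =>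
        Nat.mod_mod_of_dvd a (dvd_pow_self p (Nat.succ_ne_zero r))
      have h2 : ∀ a : ℕ, a % p ^ (r + 1) / p = a / p % p ^ r := by
        intro a
        rw [pow_succ, mul_comm, Nat.mod_mul_right_div_self]
      have h3 : ∀ a : ℕ, a / p / p ^ r = a / p ^ (r + 1) := by
        intro a
        rw [Nat.div_div_eq_div_mul, pow_succ, mul_comm]
      rw [h1, h1, h2, h2, h3, h3]
      ring

/-- **Equation (3) / Lucas' theorem for Pascal matrices**: Let `p` be a prime and `r ∈ ℕ`.
Then the Pascal matrix `Pasc_{p^r}(𝔽_p)` equals the `r`-fold Kronecker product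
`Pasc_p(𝔽_p)^{⊗ r}` (under base-`p` digit indexing). -/
theorem pascal_matrix_eq_kronecker_pow (p r : ℕ) (hp : p.Prime) :
    (Matrix.of fun i j : Fin (p ^ r) => (((i : ℕ).choose (j : ℕ) : ZMod p))) =
      kroneckerPow (Matrix.of fun i j : Fin p => (((i : ℕ).choose (j : ℕ) : ZMod p))) r := by
  induction r with
  | zero =>
      ext i j
      fin_cases i; fin_cases j
      simp [kroneckerPow, Matrix.one_apply]
      rfl
  | succ r ih =>
      ext i j
      rw [kroneckerPow, ← ih]
      simp only [Matrix.reindex_apply, Matrix.submatrix_apply, Equiv.symm_trans_apply,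
        finCongr_symm, finCongr_apply, finProdFinEquiv_symm_apply, Matrix.kroneckerMap_apply,
        Matrix.of_apply]
      have hdiv : ∀ x : Fin (p ^ (r + 1)), ((Fin.cast (by ring : p ^ (r+1) = p * p ^ r) x).divNat : ℕ) = (x : ℕ) / p ^ r := fun x => rfl
      have hmod : ∀ x : Fin (p ^ (r + 1)), ((Fin.cast (by ring : p ^ (r+1) = p * p ^ r) x).modNat : ℕ) = (x : ℕ) % p ^ r := fun x => rfl
      rw [hdiv, hdiv, hmod, hmod]
      exact choose_split p hp r i j
end

section
/- Let p be a prime and n, t ∈ ℕ, and let K_t be the kernel of the reduction homomorphism GL_n(ℤ/p^{t+1}ℤ) → GL_n(ℤ/p^tℤ), that is, K_t = { I_n + p^t·(a_{ij}) : a_{ij} ∈ ℤ/p^{t+1}ℤ }. Then the number of circulant matrices in K_t is exactly p^n, i.e., |K_t ∩ RC_n(ℤ/p^{t+1}ℤ)| = p^n. -/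
section Aux

variable (p t : ℕ)

private lemma ker_mul_self (hp : p.Prime) (ht : 0 < t)
    {x : ZMod (p ^ (t + 1))}
    (hx : ZMod.castHom (pow_dvd_pow p (Nat.le_succ t)) (ZMod (p ^ t)) x = 0) :
    x * x = 0 := by
  haveI : NeZero (p ^ (t + 1)) := ⟨pow_ne_zero _ hp.pos.ne'⟩
  have h1 : ((x.val : ℕ) : ZMod (p ^ t)) = 0 := by
    rwa [ZMod.natCast_val, ← ZMod.castHom_apply (h := pow_dvd_pow p (Nat.le_succ t))]
  rw [ZMod.natCast_eq_zero_iff] at h1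
  obtain ⟨k, hk⟩ := h1
  have hx' : x = ((p ^ t * k : ℕ) : ZMod (p ^ (t + 1))) := by
    rw [← hk, ZMod.natCast_zmod_val]
  rw [hx', ← Nat.cast_mul, ZMod.natCast_eq_zero_iff]
  have h2t : t + 1 ≤ t + t := by omega
  calc p ^ (t + 1) ∣ p ^ (t + t) := pow_dvd_pow p h2t
    _ ∣ p ^ t * k * (p ^ t * k) := ⟨k * k, by ring⟩

private lemma card_ker (hp : p.Prime) :
    Nat.card {x : ZMod (p ^ (t + 1)) //
      ZMod.castHom (pow_dvd_pow p (Nat.le_succ t)) (ZMod (p ^ t)) x = 0} = p := by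
  set f := (ZMod.castHom (pow_dvd_pow p (Nat.le_succ t)) (ZMod (p ^ t))).toAddMonoidHom
    with hf
  have hsurj : Function.Surjective f := ZMod.ringHom_surjective _
  have hquot : Nat.card (ZMod (p ^ (t + 1)) ⧸ f.ker) = p ^ t := by
    rw [Nat.card_congr (QuotientAddGroup.quotientKerEquivOfSurjective f hsurj).toEquiv]
    simp [Nat.card_eq_fintype_card, ZMod.card]
  have htot : Nat.card (ZMod (p ^ (t + 1))) = Nat.card (ZMod (p ^ (t + 1)) ⧸ f.ker)
      * Nat.card f.ker := AddSubgroup.card_eq_card_quotient_mul_card_addSubgroup f.ker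
  have hcard : Nat.card (ZMod (p ^ (t + 1))) = p ^ (t + 1) := by
    simp [Nat.card_eq_fintype_card, ZMod.card]
  have hsub : Nat.card {x : ZMod (p ^ (t + 1)) //
      ZMod.castHom (pow_dvd_pow p (Nat.le_succ t)) (ZMod (p ^ t)) x = 0} = Nat.card f.ker :=
    Nat.card_congr (Equiv.subtypeEquivRight fun x => by simp [hf, AddMonoidHom.mem_ker])
  rw [hsub]
  have hpt : (0 : ℕ) < p ^ t := pow_pos hp.pos t
  have h := htot
  rw [hquot, hcard] at h
  exact (Nat.eq_of_mul_eq_mul_left hpt (by rw [← pow_succ]; exact h)).symm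

end Aux

/-- **Counting circulant matrices in the congruence kernel**: Let `p` be a prime and
`t ≥ 1`. The kernel `K_t` of the reduction `GL_n(ℤ/p^{t+1}ℤ) → GL_n(ℤ/p^tℤ)` consists of the
invertible matrices reducing to the identity modulo `p^t`; the number of circulant matrices
in `K_t` is exactly `p^n`. -/
theorem card_circulant_in_congruence_kernel
    (p n t : ℕ) (hp : p.Prime) (ht : 0 < t) :
    Nat.card {M : Matrix (Fin n) (Fin n) (ZMod (p ^ (t + 1))) //
        IsUnit M ∧ (∃ v, M = Matrix.circulant v) ∧
          M.map (ZMod.castHom (pow_dvd_pow p (Nat.le_succ t)) (ZMod (p ^ t))) = 1} =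
      p ^ n := by
  set f := ZMod.castHom (pow_dvd_pow p (Nat.le_succ t)) (ZMod (p ^ t)) with hf
  obtain _ | m := n
  · rw [pow_zero, Nat.card_eq_one_iff_unique]
    refine ⟨⟨fun a b => ?_⟩, ⟨1, isUnit_one, ⟨Fin.elim0, Subsingleton.elim _ _⟩,
      Subsingleton.elim _ _⟩⟩
    exact Subtype.ext (Subsingleton.elim _ _)
  · set K := {x : ZMod (p ^ (t + 1)) // f x = 0} with hK
    have key : ∀ (M : Matrix (Fin (m + 1)) (Fin (m + 1)) (ZMod (p ^ (t + 1)))),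
        M.map f = 1 → ∀ i, f (M i 0) = (Pi.single (0 : Fin (m + 1)) (1 : ZMod (p ^ t)) : Fin (m + 1) → ZMod (p ^ t)) i := by
      intro M hM i
      have := congrFun (congrFun hM i) 0
      rw [Matrix.map_apply] at this
      rw [this, ← Matrix.circulant_single_one (ZMod (p ^ t)) (Fin (m + 1))]
      rw [Matrix.circulant_apply, sub_zero]
    have e : {M : Matrix (Fin (m + 1)) (Fin (m + 1)) (ZMod (p ^ (t + 1))) //
        IsUnit M ∧ (∃ v, M = Matrix.circulant v) ∧ M.map f = 1} ≃ (Fin (m + 1) → K) := by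
      have hsingle : ∀ i : Fin (m + 1),
          f ((Pi.single 0 1 : Fin (m + 1) → ZMod (p ^ (t + 1))) i)
            = (Pi.single 0 1 : Fin (m + 1) → ZMod (p ^ t)) i := by
        intro i
        rcases eq_or_ne i 0 with h | h
        · subst h; rw [Pi.single_eq_same, Pi.single_eq_same, map_one]
        · rw [Pi.single_eq_of_ne h, Pi.single_eq_of_ne h, map_zero]
      have hvmap : ∀ w : Fin (m + 1) → K,
          (Matrix.circulant
            (fun i => (w i).1 + (Pi.single 0 1 : Fin (m + 1) → ZMod (p ^ (t + 1))) i)).map f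
            = 1 := by
        intro w
        rw [Matrix.map_circulant]
        have hv : (fun i => f ((w i).1 + (Pi.single 0 1 : Fin (m + 1) → ZMod (p ^ (t + 1))) i))
            = (Pi.single 0 1 : Fin (m + 1) → ZMod (p ^ t)) := by
          funext i
          simp only [map_add, (w i).2, zero_add, hsingle i]
        show Matrix.circulant (fun i => f ((w i).1
          + (Pi.single 0 1 : Fin (m + 1) → ZMod (p ^ (t + 1))) i)) = 1
        rw [hv, Matrix.circulant_single_one]
      refine
        { toFun := fun M i =>
            ⟨M.1 i 0 - (Pi.single 0 1 : Fin (m + 1) → ZMod (p ^ (t + 1))) i, ?_⟩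
          invFun := fun w =>
            ⟨Matrix.circulant
              (fun i => (w i).1 + (Pi.single 0 1 : Fin (m + 1) → ZMod (p ^ (t + 1))) i),
              ?_, ⟨_, rfl⟩, hvmap w⟩
          left_inv := ?_
          right_inv := ?_ }
      · obtain ⟨M, _, _, hm⟩ := M
        have h1 := key M hm i
        rw [map_sub, h1, hsingle i, sub_self]
      · -- IsUnit
        set M := Matrix.circulant
          (fun i => (w i).1 + (Pi.single 0 1 : Fin (m + 1) → ZMod (p ^ (t + 1))) i) with hM
        rw [Matrix.isUnit_iff_isUnit_det]
        have hdet : f M.det = 1 := by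
          rw [RingHom.map_det, RingHom.mapMatrix_apply, hvmap w, Matrix.det_one]
        have hnil : IsNilpotent (M.det - 1) := by
          refine ⟨2, ?_⟩
          rw [sq]
          exact ker_mul_self p t hp ht (by rw [map_sub, hdet, map_one, sub_self])
        have : M.det = 1 + (M.det - 1) := by ring
        rw [this]
        exact hnil.isUnit_one_add
      · rintro ⟨M, hu, ⟨v, rfl⟩, hm⟩
        refine Subtype.ext ?_
        simp only [sub_add_cancel]
        have : (fun i => Matrix.circulant v i 0) = v := by
          funext i
          rw [Matrix.circulant_apply]
          exact congrArg v (sub_zero i)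
        rw [this]
      · intro w
        funext i
        refine Subtype.ext ?_
        dsimp only
        rw [Matrix.circulant_apply]
        have h0 : i - (0 : Fin (m + 1)) = i := sub_zero i
        rw [h0, add_sub_cancel_right]
    rw [Nat.card_congr e, Nat.card_fun, card_ker p t hp, Nat.card_eq_fintype_card,
      Fintype.card_fin]
end

section
/- Let p be a prime and n, t ∈ ℕ. Then |RC_n(ℤ/p^{t+1}ℤ)| = p^n · |RC_n(ℤ/p^tℤ)|. Consequently, |RC_n(ℤ/p^tℤ)| = p^{(t−1)n} · |RC_n(ℤ/pℤ)|. -/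
open Matrix


lemma card_subtype_comp {A B : Type*} [Finite A] [Finite B] (f : A → B) (S : B → Prop)
    (c : ℕ) (hf : ∀ b : B, S b → Nat.card {a : A // f a = b} = c) :
    Nat.card {a : A // S (f a)} = c * Nat.card {b : B // S b} := by
  classical
  haveI : Fintype A := Fintype.ofFinite A
  haveI : Fintype B := Fintype.ofFinite B
  let g : {a : A // S (f a)} → {b : B // S b} := fun a => ⟨f a.1, a.2⟩
  have e1 : {a : A // S (f a)} ≃ Σ b : {b : B // S b}, {x : {a : A // S (f a)} // g x = b} :=
    (Equiv.sigmaFiberEquiv g).symm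
  have e2 : ∀ b : {b : B // S b}, {x : {a : A // S (f a)} // g x = b} ≃ {a : A // f a = b.1} := by
    intro b
    refine ⟨fun x => ⟨x.1.1, congrArg Subtype.val x.2⟩,
      fun a => ⟨⟨a.1, by rw [a.2]; exact b.2⟩, Subtype.ext a.2⟩, ?_, ?_⟩
    · intro x; ext; rfl
    · intro a; ext; rfl
  rw [Nat.card_congr e1]
  rw [Nat.card_eq_fintype_card, Fintype.card_sigma]
  have : ∀ b : {b : B // S b}, Fintype.card {x : {a : A // S (f a)} // g x = b} = c := by
    intro b
    rw [← Nat.card_eq_fintype_card, Nat.card_congr (e2 b), hf b.1 b.2]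
  simp only [this, Finset.sum_const, Finset.card_univ, smul_eq_mul,
    Nat.card_eq_fintype_card, mul_comm]

lemma fiber_card_of_surj {A B : Type*} [AddGroup A] [AddGroup B] [Finite A] [Finite B]
    (f : A →+ B) (hf : Function.Surjective f) (b : B) :
    Nat.card {a : A // f a = b} = Nat.card A / Nat.card B := by
  obtain ⟨a0, ha0⟩ := hf b
  have e : {a : A // f a = b} ≃ f.ker := by
    refine ⟨fun a => ⟨a.1 - a0, ?_⟩, fun k => ⟨k.1 + a0, ?_⟩, ?_, ?_⟩
    · simp [AddMonoidHom.mem_ker, map_sub, a.2, ha0]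
    · have := k.2
      rw [AddMonoidHom.mem_ker] at this
      simp [map_add, this, ha0]
    · intro a; ext; simp
    · intro k; ext; simp
  rw [Nat.card_congr e]
  have hA : Nat.card A = Nat.card (A ⧸ f.ker) * Nat.card f.ker :=
    AddSubgroup.card_eq_card_quotient_mul_card_addSubgroup f.ker
  have hq : Nat.card (A ⧸ f.ker) = Nat.card B :=
    Nat.card_congr (QuotientAddGroup.quotientKerEquivOfSurjective f hf).toEquiv
  rw [hq] at hA
  rw [hA, Nat.mul_div_cancel_left]
  exact Nat.card_pos

lemma isUnit_cast_iff (p s t : ℕ) (hp : p.Prime) (hs : 0 < s) (ht : 0 < t) (h : s ≤ t)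
    (a : ZMod (p ^ t)) :
    IsUnit (ZMod.castHom (pow_dvd_pow p h) (ZMod (p ^ s)) a) ↔ IsUnit a := by
  haveI : NeZero (p ^ t) := ⟨pow_ne_zero _ hp.pos.ne'⟩
  haveI : NeZero (p ^ s) := ⟨pow_ne_zero _ hp.pos.ne'⟩
  have hcast : ZMod.castHom (pow_dvd_pow p h) (ZMod (p ^ s)) a = (a.val : ZMod (p ^ s)) := by
    rw [ZMod.castHom_apply, ← ZMod.natCast_val]
  rw [hcast]
  conv_rhs => rw [show a = ((a.val : ℕ) : ZMod (p ^ t)) by rw [ZMod.natCast_val, ZMod.cast_id]]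
  rw [ZMod.isUnit_iff_coprime, ZMod.isUnit_iff_coprime,
    Nat.coprime_pow_right_iff hs, Nat.coprime_pow_right_iff ht]

-- circulant invertible matrices correspond to vectors with invertible circulant
lemma card_circ_eq_card_vec {R : Type*} [CommRing R] (n : ℕ) :
    Nat.card {M : Matrix (Fin n) (Fin n) R // IsUnit M ∧ ∃ v, M = Matrix.circulant v} =
      Nat.card {v : Fin n → R // IsUnit (Matrix.circulant v)} := by
  refine (Nat.card_congr ?_).symm
  refine Equiv.ofBijective (fun v => ⟨Matrix.circulant v.1, v.2, v.1, rfl⟩) ⟨?_, ?_⟩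
  · intro v w hvw
    have := congrArg Subtype.val hvw
    exact Subtype.ext (Fin.circulant_injective n this)
  · rintro ⟨M, hu, v, rfl⟩
    exact ⟨⟨v, hu⟩, rfl⟩

-- the recursion step
lemma step (p n t : ℕ) (hp : p.Prime) (ht : 0 < t) :
    Nat.card {M : Matrix (Fin n) (Fin n) (ZMod (p ^ (t + 1))) //
        IsUnit M ∧ ∃ v, M = Matrix.circulant v} =
      p ^ n *
        Nat.card {M : Matrix (Fin n) (Fin n) (ZMod (p ^ t)) //
          IsUnit M ∧ ∃ v, M = Matrix.circulant v} := by
  haveI : NeZero (p ^ (t + 1)) := ⟨pow_ne_zero _ hp.pos.ne'⟩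
  haveI : NeZero (p ^ t) := ⟨pow_ne_zero _ hp.pos.ne'⟩
  rw [card_circ_eq_card_vec, card_circ_eq_card_vec]
  set π := ZMod.castHom (pow_dvd_pow p t.le_succ) (ZMod (p ^ t)) with hπ
  -- invertibility only depends on the reduction
  have key : ∀ v : Fin n → ZMod (p ^ (t + 1)),
      IsUnit (Matrix.circulant v) ↔ IsUnit (Matrix.circulant fun i => π (v i)) := by
    intro v
    rw [Matrix.isUnit_iff_isUnit_det, Matrix.isUnit_iff_isUnit_det]
    have h1 : (Matrix.circulant fun i => π (v i)) = (Matrix.circulant v).map π :=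
      (Matrix.map_circulant v π).symm
    have h2 : ((Matrix.circulant v).map ⇑π).det = π (Matrix.circulant v).det := by
      rw [← RingHom.mapMatrix_apply, ← RingHom.map_det]
    rw [h1, h2, isUnit_cast_iff p t (t + 1) hp ht t.succ_pos t.le_succ]
  have e : {v : Fin n → ZMod (p ^ (t + 1)) // IsUnit (Matrix.circulant v)} ≃
      {v : Fin n → ZMod (p ^ (t + 1)) //
        IsUnit (Matrix.circulant fun i => π (v i))} :=
    Equiv.subtypeEquivRight fun v => key v
  rw [Nat.card_congr e]
  refine card_subtype_comp (A := Fin n → ZMod (p ^ (t + 1))) (fun w i => π (w i))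
    (fun w => IsUnit (Matrix.circulant w)) (p ^ n) ?_
  intro w _
  have efib : {v : Fin n → ZMod (p ^ (t + 1)) // (fun i => π (v i)) = w} ≃
      ∀ i : Fin n, {a : ZMod (p ^ (t + 1)) // π a = w i} := by
    refine (Equiv.subtypeEquivRight fun v => funext_iff).trans ?_
    exact Equiv.subtypePiEquivPi (p := fun i a => π a = w i)
  rw [Nat.card_congr efib, Nat.card_pi]
  have hfib : ∀ b : ZMod (p ^ t), Nat.card {a : ZMod (p ^ (t + 1)) // π a = b} = p := by
    intro b
    have := fiber_card_of_surj π.toAddMonoidHom (ZMod.ringHom_surjective π) b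
    simp only [RingHom.toAddMonoidHom_eq_coe, AddMonoidHom.coe_coe] at this
    rw [this, Nat.card_zmod, Nat.card_zmod, pow_succ,
      Nat.mul_div_cancel_left _ (pow_pos hp.pos t)]
  calc ∏ x : Fin n, Nat.card {a : ZMod (p ^ (t + 1)) // π a = w x}
      = ∏ _x : Fin n, p := Finset.prod_congr rfl fun x _ => hfib (w x)
    _ = p ^ n := by simp



/-- **Recursion for the order of `RC_n(ℤ/p^tℤ)`**: Let `p` be a prime, `n ∈ ℕ` and `t ≥ 1`.
Then `|RC_n(ℤ/p^{t+1}ℤ)| = p^n · |RC_n(ℤ/p^tℤ)|`, and consequently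
`|RC_n(ℤ/p^tℤ)| = p^{(t−1)n} · |RC_n(ℤ/pℤ)|`. -/
theorem card_regular_circulant_zmod_prime_pow
    (p n t : ℕ) (hp : p.Prime) (ht : 0 < t) :
    Nat.card {M : Matrix (Fin n) (Fin n) (ZMod (p ^ (t + 1))) //
        IsUnit M ∧ ∃ v, M = Matrix.circulant v} =
      p ^ n *
        Nat.card {M : Matrix (Fin n) (Fin n) (ZMod (p ^ t)) //
          IsUnit M ∧ ∃ v, M = Matrix.circulant v} ∧
    Nat.card {M : Matrix (Fin n) (Fin n) (ZMod (p ^ t)) //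
        IsUnit M ∧ ∃ v, M = Matrix.circulant v} =
      p ^ ((t - 1) * n) *
        Nat.card {M : Matrix (Fin n) (Fin n) (ZMod p) //
          IsUnit M ∧ ∃ v, M = Matrix.circulant v} := by
  
  refine ⟨step p n t hp ht, ?_⟩
  induction t, ht using Nat.le_induction with
  | base =>
    have h1 : p ^ 1 = p := pow_one p
    rw [h1]
    simp
  | succ t ht ih =>
    rw [step p n t hp ht, ih, ← mul_assoc, ← pow_add]
    congr 2
    have : t - 1 + 1 = t := Nat.succ_pred_eq_of_pos ht
    rw [Nat.add_sub_cancel]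
    calc n + (t - 1) * n = (1 + (t - 1)) * n := by ring
    _ = t * n := by rw [Nat.add_comm, this]
end

section
/- Let p be a prime, r, m, s ∈ ℕ with p ∤ m, set n = m·p^r, and let μ ∈ 𝔽_{p^s} be a primitive m-th root of unity. Let Ã be the block-diagonal (n × n)-matrix over 𝔽_{p^s} whose b-th diagonal block (1 ≤ b ≤ m) is the (p^r × p^r)-Jordan block with eigenvalue μ^b. Then for a vector v ∈ 𝔽_{p^s}^n, written in blocks v = (v_{(1)}, …, v_{(m)}) with v_{(b)} = (v_{b,1}, …, v_{b,p^r}) ∈ 𝔽_{p^s}^{p^r}, the vectors Ã^{n−1}v, Ã^{n−2}v, …, Ãv, v form a basis of 𝔽_{p^s}^n if and only if v_{b,p^r} ≠ 0 for all 1 ≤ b ≤ m. -/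
open Polynomial Matrix

namespace JordanBlockAux

variable {F : Type*} [Field F]

/-- The Jordan block. -/
def jblock (N : ℕ) (lam : F) : Matrix (Fin N) (Fin N) F :=
  Matrix.of fun i j => if j = i then lam else if (j : ℕ) = (i : ℕ) + 1 then 1 else 0

/-- Extension of a vector on `Fin N` to `ℕ` by zero. -/
def extv (N : ℕ) (w : Fin N → F) (j : ℕ) : F := if h : j < N then w ⟨j, h⟩ else 0

lemma sum_mulVec {ι N : Type*} [Fintype N] [DecidableEq N] (s : Finset ι)
    (M : ι → Matrix N N F) (w : N → F) :
    (∑ i ∈ s, M i).mulVec w = ∑ i ∈ s, (M i).mulVec w := by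
  ext j
  simp only [Matrix.mulVec, dotProduct, Matrix.sum_apply, Finset.sum_mul,
    Finset.sum_apply]
  rw [Finset.sum_comm]

lemma nil_apply (N : ℕ) (lam : F) (i j : Fin N) :
    (jblock N lam - lam • 1) i j = if (j : ℕ) = (i : ℕ) + 1 then 1 else 0 := by
  rcases eq_or_ne j i with rfl | h
  · simp [jblock, Matrix.one_apply]
  · simp [jblock, Matrix.sub_apply, Matrix.smul_apply, Matrix.one_apply, h, Ne.symm h, if_neg h]

lemma nil_mulVec (N : ℕ) (lam : F) (u : Fin N → F) (i : Fin N) :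
    (jblock N lam - lam • 1).mulVec u i = extv N u ((i : ℕ) + 1) := by
  simp only [Matrix.mulVec, dotProduct, nil_apply, ite_mul, one_mul, zero_mul]
  by_cases h : (i : ℕ) + 1 < N
  · rw [Finset.sum_eq_single (⟨(i : ℕ) + 1, h⟩ : Fin N)]
    · simp [extv, h]
    · intro b _ hb
      rw [if_neg]
      intro hc
      exact hb (Fin.ext hc)
    · simp
  · rw [extv, dif_neg h, Finset.sum_eq_zero]
    intro b _
    rw [if_neg]
    intro hc
    exact h (hc ▸ b.isLt)

lemma nil_pow_mulVec (N : ℕ) (lam : F) (t : ℕ) (u : Fin N → F) (i : Fin N) :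
    ((jblock N lam - lam • 1) ^ t).mulVec u i = extv N u ((i : ℕ) + t) := by
  induction t generalizing u with
  | zero => simp [extv, i.isLt]
  | succ t ih =>
      rw [pow_succ, ← Matrix.mulVec_mulVec, ih]
      rcases Nat.lt_or_ge ((i : ℕ) + t) N with h | h
      · rw [extv, dif_pos h, nil_mulVec]
        congr 1
      · rw [extv, dif_neg (not_lt.2 h), extv, dif_neg]
        omega

lemma jblock_pow_mulVec_last (N : ℕ) (lam : F) (hN : 0 < N) (k : ℕ) (w : Fin N → F) :
    ((jblock N lam) ^ k).mulVec w ⟨N - 1, Nat.sub_lt hN Nat.one_pos⟩ =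
      lam ^ k * w ⟨N - 1, Nat.sub_lt hN Nat.one_pos⟩ := by
  induction k generalizing w with
  | zero => simp
  | succ k ih =>
      rw [pow_succ, ← Matrix.mulVec_mulVec, ih]
      have hlast : (jblock N lam).mulVec w ⟨N - 1, Nat.sub_lt hN Nat.one_pos⟩ =
          lam * w ⟨N - 1, Nat.sub_lt hN Nat.one_pos⟩ := by
        simp only [Matrix.mulVec, dotProduct, jblock, Matrix.of_apply]
        rw [Finset.sum_eq_single (⟨N - 1, Nat.sub_lt hN Nat.one_pos⟩ : Fin N)]
        · simp
        · intro b _ hb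
          rw [if_neg hb, if_neg, zero_mul]
          have := b.isLt
          omega
        · simp
      rw [hlast, mul_left_comm]
      ring

lemma aeval_mulVec_last (N : ℕ) (lam : F) (hN : 0 < N) (f : F[X]) (w : Fin N → F) :
    (aeval (jblock N lam) f).mulVec w ⟨N - 1, Nat.sub_lt hN Nat.one_pos⟩ =
      f.eval lam * w ⟨N - 1, Nat.sub_lt hN Nat.one_pos⟩ := by
  rw [Polynomial.aeval_eq_sum_range (x := jblock N lam) (p := f), sum_mulVec]
  rw [Finset.sum_apply]
  rw [Polynomial.eval_eq_sum_range, Finset.sum_mul]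
  refine Finset.sum_congr rfl fun k _ => ?_
  rw [Matrix.smul_mulVec, Pi.smul_apply, jblock_pow_mulVec_last N lam hN,
    smul_eq_mul, mul_assoc]

lemma aeval_X_sub_C (N : ℕ) (lam : F) :
    aeval (jblock N lam) (X - C lam) = jblock N lam - lam • 1 := by
  rw [map_sub, aeval_X, aeval_C, Algebra.algebraMap_eq_smul_one]

/-- If `(X - lam)^N ∣ q` then `q(J)` kills every vector. -/
lemma aeval_mulVec_eq_zero_of_dvd (N : ℕ) (lam : F) (q : F[X])
    (hdvd : (X - C lam) ^ N ∣ q) (w : Fin N → F) :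
    (aeval (jblock N lam) q).mulVec w = 0 := by
  obtain ⟨g, rfl⟩ := hdvd
  funext i
  rw [_root_.map_mul, map_pow, aeval_X_sub_C, ← Matrix.mulVec_mulVec, nil_pow_mulVec,
    extv, dif_neg (by omega)]
  rfl

/-- If `(X - lam)^(N-1) ∣ q` and the last coordinate of `w` vanishes, `q(J) w = 0`. -/
lemma aeval_mulVec_eq_zero_of_dvd_pred (N : ℕ) (lam : F) (hN : 0 < N) (q : F[X])
    (hdvd : (X - C lam) ^ (N - 1) ∣ q)
    (w : Fin N → F) (hw : w ⟨N - 1, Nat.sub_lt hN Nat.one_pos⟩ = 0) :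
    (aeval (jblock N lam) q).mulVec w = 0 := by
  obtain ⟨g, rfl⟩ := hdvd
  funext i
  rw [_root_.map_mul, map_pow, aeval_X_sub_C, ← Matrix.mulVec_mulVec, nil_pow_mulVec]
  rcases Nat.eq_zero_or_pos (i : ℕ) with hi | hi
  · rw [extv]
    rw [dif_pos (by omega : (i : ℕ) + (N - 1) < N)]
    have : ((⟨(i : ℕ) + (N - 1), by omega⟩ : Fin N)) = ⟨N - 1, Nat.sub_lt hN Nat.one_pos⟩ := by
      apply Fin.ext; simp [hi]
    rw [this, aeval_mulVec_last N lam hN, hw, mul_zero]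
    rfl
  · rw [extv, dif_neg (by omega)]
    rfl

/-- The key divisibility: if `q(J) w = 0` and the last coordinate of `w` is nonzero,
then `(X - lam)^N ∣ q`. -/
lemma dvd_of_aeval_mulVec_eq_zero (N : ℕ) (lam : F) (hN : 0 < N) (q : F[X])
    (w : Fin N → F) (hw : w ⟨N - 1, Nat.sub_lt hN Nat.one_pos⟩ ≠ 0)
    (hq : (aeval (jblock N lam) q).mulVec w = 0) :
    (X - C lam) ^ N ∣ q := by
  suffices h : ∀ t, t ≤ N → (X - C lam) ^ t ∣ q from h N le_rfl
  intro t
  induction t with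
  | zero => intro _; simpa using dvd_refl q
  | succ t ih =>
      intro ht
      obtain ⟨g, rfl⟩ := ih (by omega)
      have key : ((aeval (jblock N lam) g).mulVec w) ⟨N - 1, Nat.sub_lt hN Nat.one_pos⟩ = 0 := by
        have h0 := congrFun hq ⟨N - 1 - t, by omega⟩
        rw [_root_.map_mul, map_pow, aeval_X_sub_C, ← Matrix.mulVec_mulVec, nil_pow_mulVec] at h0
        rw [extv] at h0
        rw [dif_pos (by omega : (N - 1 - t : ℕ) + t < N)] at h0
        have he : ((⟨(N - 1 - t : ℕ) + t, by omega⟩ : Fin N))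
            = ⟨N - 1, Nat.sub_lt hN Nat.one_pos⟩ := by
          apply Fin.ext
          show N - 1 - t + t = N - 1
          omega
        rw [he] at h0
        simpa using h0
      rw [aeval_mulVec_last N lam hN] at key
      have hg : g.eval lam = 0 := by
        rcases mul_eq_zero.1 key with h | h
        · exact h
        · exact absurd h hw
      obtain ⟨g', rfl⟩ := (Polynomial.dvd_iff_isRoot).2 hg
      exact ⟨g', by ring⟩

end JordanBlockAux
open JordanBlockAux in
/-- **Equation (4) (the set `V(Ã, p^s)`)**: Let `p` be a prime, `p ∤ m`, `n = m·p^r`, let `F`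
be the finite field with `p^s` elements and `μ ∈ F` a primitive `m`-th root of unity. Let `Ã`
be the block-diagonal matrix whose `b`-th diagonal block (`1 ≤ b ≤ m`, here `0`-based via
`b+1`) is the `(p^r × p^r)`-Jordan block with eigenvalue `μ^b`. Then for `v ∈ F^n` (written
in blocks `v_{(b)} ∈ F^{p^r}`), the vectors `Ã^{n−1}v, …, Ãv, v` form a basis of `F^n` if and
only if the last coordinate `v_{b, p^r}` of every block is nonzero. -/
theorem jordan_form_basis_criterion
    (p r m s n : ℕ) (hp : p.Prime) (hm : ¬ p ∣ m) (hs : s ≠ 0) (hn : n = m * p ^ r)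
    (F : Type*) [Field F] [Fintype F] (hF : Fintype.card F = p ^ s)
    (μ : F) (hμ : IsPrimitiveRoot μ m)
    (A : Matrix (Fin m × Fin (p ^ r)) (Fin m × Fin (p ^ r)) F)
    (hA : ∀ (b b' : Fin m) (i j : Fin (p ^ r)),
      A (b, i) (b', j) =
        if b = b' then
          (if j = i then μ ^ ((b : ℕ) + 1)
            else if (j : ℕ) = (i : ℕ) + 1 then 1 else 0)
        else 0)
    (v : Fin m × Fin (p ^ r) → F) :
    (LinearIndependent F (fun k : Fin n => (A ^ (k : ℕ)).mulVec v) ∧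
        Submodule.span F (Set.range fun k : Fin n => (A ^ (k : ℕ)).mulVec v) = ⊤) ↔
      ∀ b : Fin m, v (b, ⟨p ^ r - 1, Nat.sub_lt (pow_pos hp.pos r) Nat.one_pos⟩) ≠ 0 := by
  classical
  have hN0 : 0 < p ^ r := pow_pos hp.pos r
  have hm0 : m ≠ 0 := fun h => hm (h ▸ dvd_zero p)
  have hm1 : 0 < m := Nat.pos_of_ne_zero hm0
  have hn0 : 0 < n := by rw [hn]; exact Nat.mul_pos hm1 hN0
  set lam : Fin m → F := fun b => μ ^ ((b : ℕ) + 1) with hlam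
  have hμ0 : μ ≠ 0 := hμ.ne_zero hm0
  have hinj : Function.Injective lam := by
    have key : ∀ a b : Fin m, (a : ℕ) ≤ (b : ℕ) → lam a = lam b → a = b := by
      intro a b hab he
      simp only [hlam] at he
      have hba : ((a : ℕ) + 1) + ((b : ℕ) - (a : ℕ)) = (b : ℕ) + 1 := by omega
      have h1 : μ ^ ((a : ℕ) + 1) * μ ^ ((b : ℕ) - (a : ℕ)) = μ ^ ((a : ℕ) + 1) * 1 := by
        rw [mul_one, ← pow_add, hba]; exact he.symm
      have h2 : μ ^ ((b : ℕ) - (a : ℕ)) = 1 :=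
        mul_left_cancel₀ (pow_ne_zero _ hμ0) h1
      have hdvd := (hμ.pow_eq_one_iff_dvd _).1 h2
      have : (b : ℕ) - (a : ℕ) = 0 := Nat.eq_zero_of_dvd_of_lt hdvd (by omega)
      exact Fin.ext (by omega)
    intro a b hab
    rcases le_total (a : ℕ) (b : ℕ) with h | h
    · exact key a b h hab
    · exact (key b a h hab.symm).symm
  set J : Fin m → Matrix (Fin (p ^ r)) (Fin (p ^ r)) F := fun b => jblock (p ^ r) (lam b) with hJ
  have hstep : ∀ (u : Fin m × Fin (p ^ r) → F) (b : Fin m) (i : Fin (p ^ r)),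
      A.mulVec u (b, i) = (J b).mulVec (fun j => u (b, j)) i := by
    intro u b i
    simp only [Matrix.mulVec, dotProduct]
    rw [Fintype.sum_prod_type]
    rw [Finset.sum_eq_single b]
    · refine Finset.sum_congr rfl fun j _ => ?_
      rw [hA, if_pos rfl]
      simp [hJ, jblock, hlam]
    · intro b' _ hb'
      apply Finset.sum_eq_zero
      intro j _
      rw [hA, if_neg (Ne.symm hb'), zero_mul]
    · intro h
      exact absurd (Finset.mem_univ b) h
  have hpow : ∀ (k : ℕ) (u : Fin m × Fin (p ^ r) → F) (b : Fin m) (i : Fin (p ^ r)),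
      (A ^ k).mulVec u (b, i) = ((J b) ^ k).mulVec (fun j => u (b, j)) i := by
    intro k
    induction k with
    | zero => intro u b i; simp
    | succ k ih =>
        intro u b i
        rw [pow_succ, ← Matrix.mulVec_mulVec, ih]
        have h2 : (fun j => A.mulVec u (b, j)) = (J b).mulVec (fun j => u (b, j)) :=
          funext fun j => hstep u b j
        rw [h2, Matrix.mulVec_mulVec, ← pow_succ]
  have haev : ∀ (f : Polynomial F) (u : Fin m × Fin (p ^ r) → F) (b : Fin m) (i : Fin (p ^ r)),
      (Polynomial.aeval A f).mulVec u (b, i)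
        = (Polynomial.aeval (J b) f).mulVec (fun j => u (b, j)) i := by
    intro f u b i
    rw [Polynomial.aeval_eq_sum_range (x := A), Polynomial.aeval_eq_sum_range (x := J b),
      JordanBlockAux.sum_mulVec, JordanBlockAux.sum_mulVec, Finset.sum_apply, Finset.sum_apply]
    refine Finset.sum_congr rfl fun k _ => ?_
    rw [Matrix.smul_mulVec, Matrix.smul_mulVec, Pi.smul_apply, Pi.smul_apply,
      hpow]
  constructor
  · -- basis → last coordinates nonzero
    rintro ⟨hli, -⟩ b
    by_contra hvb
    set q : Polynomial F :=
      (Polynomial.X - Polynomial.C (lam b)) ^ ((p ^ r) - 1) *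
        ∏ b' ∈ Finset.univ.erase b, (Polynomial.X - Polynomial.C (lam b')) ^ (p ^ r) with hqdef
    have hqmonic : q.Monic :=
      ((Polynomial.monic_X_sub_C _).pow _).mul
        (Polynomial.monic_prod_of_monic _ _ fun b' _ => (Polynomial.monic_X_sub_C _).pow (p ^ r))
    have hqdeg : q.natDegree = n - 1 := by
      rw [hqdef, (((Polynomial.monic_X_sub_C _).pow _)).natDegree_mul
        (Polynomial.monic_prod_of_monic _ _ fun b' _ => (Polynomial.monic_X_sub_C _).pow (p ^ r))]
      rw [Polynomial.natDegree_pow, Polynomial.natDegree_X_sub_C, mul_one]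
      rw [Polynomial.natDegree_prod _ _
        (fun b' _ => pow_ne_zero _ (Polynomial.X_sub_C_ne_zero _))]
      simp only [Polynomial.natDegree_pow, Polynomial.natDegree_X_sub_C, mul_one]
      rw [Finset.sum_const, Finset.card_erase_of_mem (Finset.mem_univ b),
        Finset.card_univ, Fintype.card_fin, smul_eq_mul, hn]
      have h2 : (m - 1) * (p ^ r) = m * p ^ r - (p ^ r) := by rw [Nat.sub_mul, one_mul]
      rw [h2]
      have h1 : (p ^ r) ≤ m * p ^ r := Nat.le_mul_of_pos_left (p ^ r) hm1
      generalize m * p ^ r = P at *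
      omega
    have hq0 : (Polynomial.aeval A q).mulVec v = 0 := by
      funext bi
      obtain ⟨b', i⟩ := bi
      rw [haev q v b' i]
      rcases eq_or_ne b' b with rfl | hne
      · have hz := aeval_mulVec_eq_zero_of_dvd_pred (p ^ r) (lam b') hN0 q
          (dvd_mul_right _ _) (fun j => v (b', j)) hvb
        rw [hz]
        rfl
      · have hd : (Polynomial.X - Polynomial.C (lam b')) ^ (p ^ r) ∣ q :=
          Dvd.dvd.mul_left
            (Finset.dvd_prod_of_mem _ (Finset.mem_erase.2 ⟨hne, Finset.mem_univ _⟩)) _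
        have hz := aeval_mulVec_eq_zero_of_dvd (p ^ r) (lam b') q hd (fun j => v (b', j))
        rw [hz]
        rfl
    have hdeglt : q.natDegree < n := by omega
    have hrep : (Polynomial.aeval A q).mulVec v
        = ∑ k : Fin n, q.coeff (k : ℕ) • ((A ^ (k : ℕ)).mulVec v) := by
      rw [Polynomial.aeval_eq_sum_range' hdeglt A, JordanBlockAux.sum_mulVec,
        ← Fin.sum_univ_eq_sum_range (fun i => (q.coeff i • A ^ i).mulVec v) n]
      refine Finset.sum_congr rfl fun k _ => ?_
      rw [Matrix.smul_mulVec]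
    have hcsum : ∑ k : Fin n, q.coeff (k : ℕ) • ((A ^ (k : ℕ)).mulVec v) = 0 := by
      rw [← hrep, hq0]
    have hzero := Fintype.linearIndependent_iff.1 hli (fun k => q.coeff (k : ℕ)) hcsum
      ⟨n - 1, by omega⟩
    have hone : q.coeff (n - 1) = 1 := by
      have := hqmonic.coeff_natDegree
      rwa [hqdeg] at this
    simp only [hone] at hzero
    exact one_ne_zero hzero
  · -- last coordinates nonzero → basis
    intro hv
    have hli : LinearIndependent F (fun k : Fin n => (A ^ (k : ℕ)).mulVec v) := by
      rw [Fintype.linearIndependent_iff]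
      intro c hc
      set q : Polynomial F := ∑ k : Fin n, Polynomial.C (c k) * Polynomial.X ^ (k : ℕ)
        with hqdef
      have hcoeff : ∀ j : Fin n, q.coeff (j : ℕ) = c j := by
        intro j
        rw [hqdef, Polynomial.finset_sum_coeff]
        rw [Finset.sum_eq_single j]
        · rw [Polynomial.coeff_C_mul, Polynomial.coeff_X_pow, if_pos rfl, mul_one]
        · intro k _ hk
          rw [Polynomial.coeff_C_mul, Polynomial.coeff_X_pow, if_neg, mul_zero]
          exact fun h => hk (Fin.ext h.symm)
        · intro h
          exact absurd (Finset.mem_univ j) h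
      have hdeg : q.natDegree < n := by
        have hle : q.natDegree ≤ n - 1 := by
          rw [hqdef]
          refine Polynomial.natDegree_sum_le_of_forall_le _ _ fun k _ => ?_
          calc (Polynomial.C (c k) * Polynomial.X ^ (k : ℕ)).natDegree
              ≤ (Polynomial.X ^ (k : ℕ) : Polynomial F).natDegree :=
                Polynomial.natDegree_C_mul_le _ _
            _ = (k : ℕ) := Polynomial.natDegree_X_pow _
            _ ≤ n - 1 := by have := k.isLt; omega
        omega
      have hrep : (Polynomial.aeval A q).mulVec v
          = ∑ k : Fin n, c k • ((A ^ (k : ℕ)).mulVec v) := by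
        rw [Polynomial.aeval_eq_sum_range' hdeg A, JordanBlockAux.sum_mulVec,
          ← Fin.sum_univ_eq_sum_range (fun i => (q.coeff i • A ^ i).mulVec v) n]
        refine Finset.sum_congr rfl fun k _ => ?_
        rw [Matrix.smul_mulVec, hcoeff]
      have hq0 : (Polynomial.aeval A q).mulVec v = 0 := by rw [hrep]; exact hc
      have hdvd : ∀ b : Fin m, (Polynomial.X - Polynomial.C (lam b)) ^ (p ^ r) ∣ q := by
        intro b
        refine dvd_of_aeval_mulVec_eq_zero (p ^ r) (lam b) hN0 q (fun j => v (b, j)) (hv b) ?_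
        funext i
        rw [← haev q v b i]
        exact congrFun hq0 (b, i)
      have hProd : (∏ b : Fin m, (Polynomial.X - Polynomial.C (lam b)) ^ (p ^ r)) ∣ q :=
        Fintype.prod_dvd_of_coprime
          (fun a b hab => ((Polynomial.pairwise_coprime_X_sub_C hinj) hab).pow)
          hdvd
      have hPdeg : (∏ b : Fin m, (Polynomial.X - Polynomial.C (lam b)) ^ (p ^ r)).natDegree = n := by
        rw [Polynomial.natDegree_prod _ _
          (fun b _ => pow_ne_zero _ (Polynomial.X_sub_C_ne_zero _))]
        simp only [Polynomial.natDegree_pow, Polynomial.natDegree_X_sub_C, mul_one]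
        rw [Finset.sum_const, Finset.card_univ, Fintype.card_fin, smul_eq_mul, hn]
      have hqz : q = 0 := by
        by_contra hne
        have hle := Polynomial.natDegree_le_of_dvd hProd hne
        rw [hPdeg] at hle
        omega
      intro k
      rw [← hcoeff k, hqz, Polynomial.coeff_zero]
    refine ⟨hli, ?_⟩
    haveI : Nonempty (Fin n) := ⟨⟨0, hn0⟩⟩
    apply hli.span_eq_top_of_card_eq_finrank
    rw [Fintype.card_fin, Module.finrank_fintype_fun_eq_card, Fintype.card_prod,
      Fintype.card_fin, Fintype.card_fin, hn]
end
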